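/- Let R be a strongly ℤ-graded ring with grading 𝒜. For every n ≥ 0, the additive subgroup R_{≥−n} = ⨆_{m ≥ −n} 𝒜 m, regarded as a right module over the subring R_{≥0} via multiplication, is finitely generated and projective; likewise, R_{≤n} = ⨆_{m ≤ n} 𝒜 m is finitely generated projective as a right module over the subring R_{≤0}. -/

import Mathlib

/-- A ℤ-graded ring is *strongly graded* if `𝒜 i * 𝒜 j = 𝒜 (i + j)` for all `i j`. -/
def IsStronglyGraded {R : Type*} [Ring R] (𝒜 : ℤ → Submodule ℤ R) : Prop :=
  ∀ i j : ℤ, 𝒜 i * 𝒜 j = 𝒜 (i + j)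

variable {R : Type*} [Ring R] (𝒜 : ℤ → Submodule ℤ R) [GradedRing 𝒜]

/-- `R_{≤k}`, the sum of the homogeneous components of degree at most `k`. -/
def Rle (k : ℤ) : Submodule ℤ R := ⨆ n ≤ k, 𝒜 n

/-- `R_{≥k}`, the sum of the homogeneous components of degree at least `k`. -/
def Rge (k : ℤ) : Submodule ℤ R := ⨆ n ≥ k, 𝒜 n

theorem Rle_mul_Rle (a b : ℤ) : Rle 𝒜 a * Rle 𝒜 b ≤ Rle 𝒜 (a + b) := by
  rw [Rle, Rle, Submodule.iSup_mul]
  refine iSup_le fun n => ?_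
  rw [Submodule.iSup_mul]
  refine iSup_le fun hn => ?_
  rw [Submodule.mul_iSup]
  refine iSup_le fun m => ?_
  rw [Submodule.mul_iSup]
  refine iSup_le fun hm => ?_
  refine le_trans (Submodule.mul_le.2 fun x hx y hy => SetLike.mul_mem_graded hx hy) ?_
  exact le_iSup₂_of_le (n + m) (add_le_add hn hm) le_rfl

theorem Rge_mul_Rge (a b : ℤ) : Rge 𝒜 a * Rge 𝒜 b ≤ Rge 𝒜 (a + b) := by
  rw [Rge, Rge, Submodule.iSup_mul]
  refine iSup_le fun n => ?_
  rw [Submodule.iSup_mul]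
  refine iSup_le fun hn => ?_
  rw [Submodule.mul_iSup]
  refine iSup_le fun m => ?_
  rw [Submodule.mul_iSup]
  refine iSup_le fun hm => ?_
  refine le_trans (Submodule.mul_le.2 fun x hx y hy => SetLike.mul_mem_graded hx hy) ?_
  exact le_iSup₂_of_le (n + m) (add_le_add hn hm) le_rfl

/-- The subring `R_{≤0}` of `R`. -/
def RleSubring : Subring R where
  carrier := Rle 𝒜 0
  zero_mem' := zero_mem _
  add_mem' := fun h1 h2 => add_mem h1 h2
  neg_mem' := fun h => neg_mem h
  one_mem' :=
    Submodule.mem_iSup_of_mem 0 (Submodule.mem_iSup_of_mem le_rfl (SetLike.one_mem_graded 𝒜))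
  mul_mem' := fun h1 h2 => by
    simpa using Rle_mul_Rle 𝒜 0 0 (Submodule.mul_mem_mul h1 h2)

/-- The subring `R_{≥0}` of `R`. -/
def RgeSubring : Subring R where
  carrier := Rge 𝒜 0
  zero_mem' := zero_mem _
  add_mem' := fun h1 h2 => add_mem h1 h2
  neg_mem' := fun h => neg_mem h
  one_mem' :=
    Submodule.mem_iSup_of_mem 0 (Submodule.mem_iSup_of_mem le_rfl (SetLike.one_mem_graded 𝒜))
  mul_mem' := fun h1 h2 => by
    simpa using Rge_mul_Rge 𝒜 0 0 (Submodule.mul_mem_mul h1 h2)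

/-- `R_{≤k}` is a right module over `R_{≤0}` (a left module over the opposite
ring), the action being multiplication in `R`. -/
instance RleRightModule (k : ℤ) : Module ((RleSubring 𝒜)ᵐᵒᵖ) (Rle 𝒜 k) where
  smul s x := ⟨(x : R) * (s.unop : R), by
    simpa using Rle_mul_Rle 𝒜 k 0 (Submodule.mul_mem_mul x.2 s.unop.2)⟩
  one_smul x := Subtype.ext (mul_one _)
  mul_smul a b x := Subtype.ext (mul_assoc (x : R) _ _).symm
  smul_zero a := Subtype.ext (zero_mul _)
  smul_add a x y := Subtype.ext (add_mul _ _ _)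
  add_smul a b x := Subtype.ext (mul_add _ _ _)
  zero_smul x := Subtype.ext (mul_zero _)

/-- `R_{≥k}` is a right module over `R_{≥0}` (a left module over the opposite
ring), the action being multiplication in `R`. -/
instance RgeRightModule (k : ℤ) : Module ((RgeSubring 𝒜)ᵐᵒᵖ) (Rge 𝒜 k) where
  smul s x := ⟨(x : R) * (s.unop : R), by
    simpa using Rge_mul_Rge 𝒜 k 0 (Submodule.mul_mem_mul x.2 s.unop.2)⟩
  one_smul x := Subtype.ext (mul_one _)
  mul_smul a b x := Subtype.ext (mul_assoc (x : R) _ _).symm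
  smul_zero a := Subtype.ext (zero_mul _)
  smul_add a x y := Subtype.ext (add_mul _ _ _)
  add_smul a b x := Subtype.ext (mul_add _ _ _)
  zero_smul x := Subtype.ext (mul_zero _)


private lemma exists_sum_of_mem_mul {R : Type*} [Ring R] {p q : Submodule ℤ R} {r : R}
    (hr : r ∈ p * q) :
    ∃ (m : ℕ) (x y : Fin m → R), (∀ i, x i ∈ p) ∧ (∀ i, y i ∈ q) ∧ ∑ i, x i * y i = r := by
  refine Submodule.mul_induction_on hr ?_ ?_
  · intro a ha b hb
    exact ⟨1, fun _ => a, fun _ => b, fun _ => ha, fun _ => hb, by simp⟩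
  · rintro a b ⟨m₁, x₁, y₁, hx₁, hy₁, h₁⟩ ⟨m₂, x₂, y₂, hx₂, hy₂, h₂⟩
    refine ⟨m₁ + m₂, Fin.append x₁ x₂, Fin.append y₁ y₂, ?_, ?_, ?_⟩
    · intro i
      refine Fin.addCases (fun j => ?_) (fun j => ?_) i
      · simpa [Fin.append_left] using hx₁ j
      · simpa [Fin.append_right] using hx₂ j
    · intro i
      refine Fin.addCases (fun j => ?_) (fun j => ?_) i
      · simpa [Fin.append_left] using hy₁ j
      · simpa [Fin.append_right] using hy₂ j
    · rw [Fin.sum_univ_add]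
      simp only [Fin.append_left, Fin.append_right, h₁, h₂]

lemma mem_Rge {j k : ℤ} (hjk : k ≤ j) {x : R} (hx : x ∈ 𝒜 j) : x ∈ Rge 𝒜 k :=
  Submodule.mem_iSup_of_mem j (Submodule.mem_iSup_of_mem hjk hx)

lemma mem_Rle {j k : ℤ} (hjk : j ≤ k) {x : R} (hx : x ∈ 𝒜 j) : x ∈ Rle 𝒜 k :=
  Submodule.mem_iSup_of_mem j (Submodule.mem_iSup_of_mem hjk hx)

lemma smul_Rge_coe {k : ℤ} (s : (RgeSubring 𝒜)ᵐᵒᵖ) (x : Rge 𝒜 k) :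
    ((s • x : Rge 𝒜 k) : R) = (x : R) * (s.unop : R) := rfl

lemma smul_Rle_coe {k : ℤ} (s : (RleSubring 𝒜)ᵐᵒᵖ) (x : Rle 𝒜 k) :
    ((s • x : Rle 𝒜 k) : R) = (x : R) * (s.unop : R) := rfl

lemma Rge_fp (h : IsStronglyGraded 𝒜) (n : ℤ) (hn : 0 ≤ n) :
    Module.Finite ((RgeSubring 𝒜)ᵐᵒᵖ) (Rge 𝒜 (-n)) ∧
      Module.Projective ((RgeSubring 𝒜)ᵐᵒᵖ) (Rge 𝒜 (-n)) := by
  have h1 : (1 : R) ∈ 𝒜 (-n) * 𝒜 n := by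
    rw [h (-n) n]
    simpa using SetLike.one_mem_graded 𝒜
  obtain ⟨m, x, y, hx, hy, hsum⟩ := exists_sum_of_mem_mul h1
  have hyr : ∀ i (r : Rge 𝒜 (-n)), y i * (r : R) ∈ RgeSubring 𝒜 := fun i r => by
    have := Rge_mul_Rge 𝒜 n (-n)
      (Submodule.mul_mem_mul (mem_Rge 𝒜 le_rfl (hy i)) r.2)
    simp at this; exact this
  have hxm : ∀ i, x i ∈ Rge 𝒜 (-n) := fun i => mem_Rge 𝒜 le_rfl (hx i)
  let f : Rge 𝒜 (-n) →ₗ[(RgeSubring 𝒜)ᵐᵒᵖ] (Fin m → (RgeSubring 𝒜)ᵐᵒᵖ) :=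
    { toFun := fun r i => MulOpposite.op ⟨y i * r, hyr i r⟩
      map_add' := fun r s => by
        funext i
        apply MulOpposite.unop_injective
        apply Subtype.ext
        simp [mul_add]
      map_smul' := fun s r => by
        funext i
        apply MulOpposite.unop_injective
        apply Subtype.ext
        simp [smul_Rge_coe, mul_assoc] }
  let g : (Fin m → (RgeSubring 𝒜)ᵐᵒᵖ) →ₗ[(RgeSubring 𝒜)ᵐᵒᵖ] Rge 𝒜 (-n) :=
    { toFun := fun v => ∑ i, v i • (⟨x i, hxm i⟩ : Rge 𝒜 (-n))
      map_add' := fun v w => by simp [add_smul, Finset.sum_add_distrib]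
      map_smul' := fun s v => by simp [mul_smul, Finset.smul_sum] }
  have hgf : ∀ r : Rge 𝒜 (-n), g (f r) = r := fun r => by
    apply Subtype.ext
    show ((∑ i, _ • _ : Rge 𝒜 (-n)) : R) = (r : R)
    rw [AddSubmonoidClass.coe_finset_sum]
    simp only [smul_Rge_coe]
    calc (∑ i, (x i : R) * (y i * (r : R)))
        = (∑ i, x i * y i) * (r : R) := by rw [Finset.sum_mul]; simp [mul_assoc]
      _ = (r : R) := by rw [hsum, one_mul]
  refine ⟨Module.Finite.of_surjective g (fun r => ⟨f r, hgf r⟩), ?_⟩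
  exact Module.Projective.of_split f g (LinearMap.ext hgf)

lemma Rle_fp (h : IsStronglyGraded 𝒜) (n : ℤ) (hn : 0 ≤ n) :
    Module.Finite ((RleSubring 𝒜)ᵐᵒᵖ) (Rle 𝒜 n) ∧
      Module.Projective ((RleSubring 𝒜)ᵐᵒᵖ) (Rle 𝒜 n) := by
  have h1 : (1 : R) ∈ 𝒜 n * 𝒜 (-n) := by
    rw [h n (-n)]
    simpa using SetLike.one_mem_graded 𝒜
  obtain ⟨m, x, y, hx, hy, hsum⟩ := exists_sum_of_mem_mul h1
  have hyr : ∀ i (r : Rle 𝒜 n), y i * (r : R) ∈ RleSubring 𝒜 := fun i r => by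
    have := Rle_mul_Rle 𝒜 (-n) n
      (Submodule.mul_mem_mul (mem_Rle 𝒜 le_rfl (hy i)) r.2)
    simp at this; exact this
  have hxm : ∀ i, x i ∈ Rle 𝒜 n := fun i => mem_Rle 𝒜 le_rfl (hx i)
  let f : Rle 𝒜 n →ₗ[(RleSubring 𝒜)ᵐᵒᵖ] (Fin m → (RleSubring 𝒜)ᵐᵒᵖ) :=
    { toFun := fun r i => MulOpposite.op ⟨y i * r, hyr i r⟩
      map_add' := fun r s => by
        funext i
        apply MulOpposite.unop_injective
        apply Subtype.ext
        simp [mul_add]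
      map_smul' := fun s r => by
        funext i
        apply MulOpposite.unop_injective
        apply Subtype.ext
        simp [smul_Rle_coe, mul_assoc] }
  let g : (Fin m → (RleSubring 𝒜)ᵐᵒᵖ) →ₗ[(RleSubring 𝒜)ᵐᵒᵖ] Rle 𝒜 n :=
    { toFun := fun v => ∑ i, v i • (⟨x i, hxm i⟩ : Rle 𝒜 n)
      map_add' := fun v w => by simp [add_smul, Finset.sum_add_distrib]
      map_smul' := fun s v => by simp [mul_smul, Finset.smul_sum] }
  have hgf : ∀ r : Rle 𝒜 n, g (f r) = r := fun r => by
    apply Subtype.ext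
    show ((∑ i, _ • _ : Rle 𝒜 n) : R) = (r : R)
    rw [AddSubmonoidClass.coe_finset_sum]
    simp only [smul_Rle_coe]
    calc (∑ i, (x i : R) * (y i * (r : R)))
        = (∑ i, x i * y i) * (r : R) := by rw [Finset.sum_mul]; simp [mul_assoc]
      _ = (r : R) := by rw [hsum, one_mul]
  refine ⟨Module.Finite.of_surjective g (fun r => ⟨f r, hgf r⟩), ?_⟩
  exact Module.Projective.of_split f g (LinearMap.ext hgf)

/-- If `R` is strongly ℤ-graded then, for `n ≥ 0`, `R_{≥-n}` is a finitely
generated projective right `R_{≥0}`-module and `R_{≤n}` is a finitely generated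
projective right `R_{≤0}`-module. -/
theorem Rge_Rle_finite_projective (h : IsStronglyGraded 𝒜) (n : ℤ) (hn : 0 ≤ n) :
    (Module.Finite ((RgeSubring 𝒜)ᵐᵒᵖ) (Rge 𝒜 (-n)) ∧
      Module.Projective ((RgeSubring 𝒜)ᵐᵒᵖ) (Rge 𝒜 (-n))) ∧
    (Module.Finite ((RleSubring 𝒜)ᵐᵒᵖ) (Rle 𝒜 n) ∧
      Module.Projective ((RleSubring 𝒜)ᵐᵒᵖ) (Rle 𝒜 n)) := by
  exact ⟨Rge_fp 𝒜 h n hn, Rle_fp 𝒜 h n hn⟩
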